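/- Fix 0 < β < 1, 0 < l, a real δ, and a continuous function τ on [0, l]. Then for all y > 0: (i) for |a| ≥ 2l and each choice of sign, ∫₀^l 𝓝_{0l}^{δ, a ± x, y} τ dx = ± sign(a) [𝓝_{0l}^{δ+β, a, y} τ − 𝓝_{0l}^{δ+β, a ± l, y} τ]; (ii) ∫₀^l 𝓝_{0l}^{δ, -x, y} τ dx = 𝓝_{0l}^{δ+β, 0, y} τ − 𝓝_{0l}^{δ+β, -l, y} τ; (iii) ∫₀^l 𝓝_{0l}^{δ, x, y} τ dx = −[𝓝_{0l}^{δ+β, 0, y} τ + 𝓝_{0l}^{δ+β, l, y} τ] + (y^{δ+β-1}/Γ(δ+β)) ∫₀^l τ(x) dx. -/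

import Mathlib

/-- The Wright function `φ(ρ, μ; z) = ∑ z^k / (k! Γ(ρk + μ))`. -/
noncomputable def wright (ρ μ : ℝ) (z : ℝ) : ℝ :=
  ∑' k : ℕ, z ^ k / (Nat.factorial k * Real.Gamma (ρ * k + μ))

/-- The operator 𝓝_{x₁x₂}^{θ,x,y}. -/
noncomputable def Nop (β x₁ x₂ θ x y : ℝ) (f : ℝ → ℝ) : ℝ :=
  (1/2) * ∫ t in x₁..x₂, f t * (y ^ (θ - 1) * wright (-β) θ (-(|x - t| * y ^ (-β))))

open Real Set Filter MeasureTheory intervalIntegral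

lemma Gamma_add_le {x b : ℝ} (hx : 2 ≤ x) (hb0 : 0 ≤ b) (hb1 : b ≤ 1) :
    Real.Gamma (x + b) ≤ Real.Gamma x * x ^ b := by
  have hx0 : 0 < x := by linarith
  have hconv := Real.convexOn_log_Gamma.2 (Set.mem_Ioi.mpr hx0)
    (Set.mem_Ioi.mpr (by linarith : (0:ℝ) < x + 1)) (by linarith : 0 ≤ 1 - b) hb0 (by ring)
  simp only [smul_eq_mul, Function.comp_apply] at hconv
  have hxb : (1 - b) * x + b * (x + 1) = x + b := by ring
  rw [hxb, Real.Gamma_add_one hx0.ne'] at hconv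
  rw [Real.log_mul hx0.ne' (Real.Gamma_pos_of_pos hx0).ne'] at hconv
  have h2 : Real.log (Real.Gamma (x + b)) ≤ Real.log (Real.Gamma x) + b * Real.log x := by
    nlinarith [hconv]
  calc Real.Gamma (x + b) = Real.exp (Real.log (Real.Gamma (x + b))) :=
        (Real.exp_log (Real.Gamma_pos_of_pos (by linarith))).symm
    _ ≤ Real.exp (Real.log (Real.Gamma x) + b * Real.log x) := Real.exp_le_exp.mpr h2
    _ = Real.Gamma x * x ^ b := by
        rw [Real.exp_add, Real.exp_log (Real.Gamma_pos_of_pos hx0),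
          Real.rpow_def_of_pos hx0, mul_comm (Real.log x) b]

lemma summable_majorant {β : ℝ} (hβ0 : 0 < β) (hβ1 : β < 1) {c : ℝ} (hc : 2 ≤ c)
    {R : ℝ} (hR : 0 ≤ R) :
    Summable (fun k : ℕ => R ^ k * Real.Gamma (β * k + c) / k.factorial) := by
  set b : ℕ → ℝ := fun k => R ^ k * Real.Gamma (β * k + c) / k.factorial with hb
  have hbpos : ∀ k, 0 ≤ b k := fun k => by
    apply div_nonneg (mul_nonneg (pow_nonneg hR k) (Real.Gamma_nonneg_of_nonneg (by positivity)))
    positivity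
  have hxk : ∀ k : ℕ, (2:ℝ) ≤ β * k + c := fun k => by
    have : (0:ℝ) ≤ β * k := by positivity
    linarith
  have hratio : ∀ k : ℕ, b (k + 1) ≤ (R * (β * k + c) ^ β / (k + 1)) * b k := by
    intro k
    have h1 : Real.Gamma (β * ((k:ℝ) + 1) + c) ≤ Real.Gamma (β * k + c) * (β * k + c) ^ β := by
      have := Gamma_add_le (hxk k) hβ0.le hβ1.le
      have he : β * ((k:ℝ) + 1) + c = (β * k + c) + β := by ring
      rw [he]; exact this
    have hfac : ((k + 1 : ℕ).factorial : ℝ) = ((k:ℝ) + 1) * k.factorial := by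
      rw [Nat.factorial_succ]; push_cast; ring
    have step : b (k+1) ≤ R ^ (k+1) * (Real.Gamma (β*k+c) * (β*k+c) ^ β) / (((k:ℝ)+1) * k.factorial) := by
      simp only [hb]
      rw [hfac]
      push_cast
      gcongr
    refine step.trans (le_of_eq ?_)
    simp only [hb]
    have hk0 : ((k:ℝ) + 1) ≠ 0 := by positivity
    have hf0 : ((k.factorial : ℝ)) ≠ 0 := by positivity
    field_simp
    ring
  have htend : Tendsto (fun k : ℕ => R * (β * k + c) ^ β / ((k:ℝ) + 1)) atTop (nhds 0) := by
    have hbd : ∀ k : ℕ, R * (β * k + c) ^ β / ((k:ℝ) + 1) ≤ R * (β + c) ^ β * ((k:ℝ) + 1) ^ (β - 1) := by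
      intro k
      have h1 : β * k + c ≤ (β + c) * ((k:ℝ) + 1) := by
        have : (0:ℝ) ≤ c * k := by positivity
        have hk : (0:ℝ) ≤ k := Nat.cast_nonneg k
        nlinarith
      have h2 : (β * k + c) ^ β ≤ ((β + c) * ((k:ℝ) + 1)) ^ β :=
        Real.rpow_le_rpow (by positivity) h1 hβ0.le
      have h3 : ((β + c) * ((k:ℝ) + 1)) ^ β = (β + c) ^ β * ((k:ℝ)+1) ^ β :=
        Real.mul_rpow (by positivity) (by positivity)
      have h4 : ((k:ℝ) + 1) ^ (β - 1) = ((k:ℝ)+1) ^ β / ((k:ℝ)+1) := by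
        rw [Real.rpow_sub (by positivity), Real.rpow_one]
      rw [h4, ← mul_div_assoc, div_le_div_iff₀ (by positivity) (by positivity)]
      have := mul_le_mul_of_nonneg_left (h3 ▸ h2) hR
      nlinarith [this]
    have hlim : Tendsto (fun k : ℕ => R * (β + c) ^ β * ((k:ℝ) + 1) ^ (β - 1)) atTop (nhds 0) := by
      have h0 : Tendsto (fun x : ℝ => x ^ (β - 1)) atTop (nhds 0) := by
        have := tendsto_rpow_neg_atTop (by linarith : (0:ℝ) < 1 - β)
        simpa [neg_sub] using this
      have h1 : Tendsto (fun k : ℕ => ((k:ℝ) + 1)) atTop atTop :=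
        tendsto_atTop_add_const_right _ 1 tendsto_natCast_atTop_atTop
      simpa [mul_zero] using (h0.comp h1).const_mul (R * (β + c) ^ β)
    refine squeeze_zero (fun k => by positivity) hbd hlim
  refine summable_of_ratio_norm_eventually_le (r := 1/2) (by norm_num) ?_
  filter_upwards [htend.eventually (gt_mem_nhds (by norm_num : (0:ℝ) < 1/2))] with k hk
  rw [Real.norm_of_nonneg (hbpos _), Real.norm_of_nonneg (hbpos _)]
  calc b (k+1) ≤ (R * (β * k + c) ^ β / ((k:ℝ) + 1)) * b k := hratio k
    _ ≤ (1/2) * b k := mul_le_mul_of_nonneg_right hk.le (hbpos k)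

lemma wright_norm_summable {β : ℝ} (hβ0 : 0 < β) (hβ1 : β < 1) (μ : ℝ) {R : ℝ} (hR : 0 ≤ R) :
    Summable (fun k : ℕ => R ^ k / (k.factorial * |Real.Gamma (-β * k + μ)|)) := by
  set c : ℝ := |μ| + 3 with hcdef
  have hc : 2 ≤ c := by have := abs_nonneg μ; simp only [hcdef]; linarith
  have hmaj := (summable_majorant hβ0 hβ1 hc hR).mul_right π⁻¹
  refine Summable.of_norm_bounded_eventually hmaj ?_
  rw [Nat.cofinite_eq_atTop]
  have hev : ∀ᶠ k : ℕ in atTop, μ + 1 ≤ β * k := by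
    have ht : Tendsto (fun k : ℕ => β * (k:ℝ)) atTop atTop :=
      Tendsto.const_mul_atTop hβ0 tendsto_natCast_atTop_atTop
    exact ht.eventually_ge_atTop (μ + 1)
  filter_upwards [hev] with k hk
  set x : ℝ := -β * k + μ with hx
  have hfz : (0:ℝ) < k.factorial := by positivity
  have h1x : (2:ℝ) ≤ 1 - x := by simp only [hx]; linarith
  have h1xc : 1 - x ≤ β * k + c := by
    simp only [hx, hcdef]
    have := le_abs_self μ; have := neg_abs_le μ
    linarith
  have hG1 : Real.Gamma (1 - x) ≤ Real.Gamma (β * k + c) :=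
    Real.Gamma_strictMonoOn_Ici.monotoneOn (mem_Ici.mpr h1x)
      (mem_Ici.mpr (h1x.trans h1xc)) h1xc
  have hGpos : 0 < Real.Gamma (1 - x) := Real.Gamma_pos_of_pos (by linarith)
  have key : 1 / |Real.Gamma x| ≤ Real.Gamma (β * k + c) / π := by
    rcases eq_or_ne (Real.Gamma x) 0 with hG | hG
    · rw [hG, abs_zero, div_zero]
      exact div_nonneg (Real.Gamma_nonneg_of_nonneg (by positivity)) pi_pos.le
    · have hrefl := Real.Gamma_mul_Gamma_one_sub x
      have hsin : Real.sin (π * x) ≠ 0 := by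
        intro h0
        rw [h0, div_zero] at hrefl
        exact (mul_ne_zero hG hGpos.ne') hrefl
      have hGx : |Real.Gamma x| = π / (|Real.sin (π * x)| * Real.Gamma (1 - x)) := by
        have : Real.Gamma x = π / Real.sin (π * x) / Real.Gamma (1 - x) := by
          field_simp at hrefl ⊢
          linarith [hrefl]
        rw [this, abs_div, abs_div, abs_of_pos pi_pos, abs_of_pos hGpos, div_div]
      rw [hGx, one_div_div]
      have hs1 : |Real.sin (π * x)| ≤ 1 := abs_sin_le_one _
      have hs0 : 0 < |Real.sin (π * x)| := abs_pos.mpr hsin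
      calc |Real.sin (π * x)| * Real.Gamma (1 - x) / π
          ≤ 1 * Real.Gamma (β * k + c) / π := by gcongr
        _ = Real.Gamma (β * k + c) / π := by ring
  have hLHS : ‖R ^ k / (↑k.factorial * |Real.Gamma x|)‖
      = R ^ k / ↑k.factorial * (1 / |Real.Gamma x|) := by
    rw [Real.norm_of_nonneg (by positivity)]
    rw [div_mul_eq_div_div, div_eq_mul_one_div]
  rw [hLHS]
  calc R ^ k / ↑k.factorial * (1 / |Real.Gamma x|)
      ≤ R ^ k / ↑k.factorial * (Real.Gamma (β * k + c) / π) :=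
        mul_le_mul_of_nonneg_left key (by positivity)
    _ = R ^ k * Real.Gamma (β * ↑k + c) / ↑k.factorial * π⁻¹ := by
        field_simp

lemma div_le_div_nonneg_denom {a b d : ℝ} (h : a ≤ b) (hd : 0 ≤ d) : a / d ≤ b / d := by
  rcases hd.eq_or_lt with rfl | hd
  · simp
  · exact (div_le_div_iff_of_pos_right hd).mpr h

lemma wright_term_norm (β μ z : ℝ) (k : ℕ) :
    ‖z ^ k / (k.factorial * Real.Gamma (-β * k + μ))‖
      = |z| ^ k / (k.factorial * |Real.Gamma (-β * k + μ)|) := by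
  rw [Real.norm_eq_abs, abs_div, abs_mul, abs_pow, Nat.abs_cast]

lemma wright_summable {β : ℝ} (hβ0 : 0 < β) (hβ1 : β < 1) (μ z : ℝ) :
    Summable (fun k : ℕ => z ^ k / (k.factorial * Real.Gamma (-β * k + μ))) := by
  apply Summable.of_norm
  simp only [wright_term_norm]
  exact wright_norm_summable hβ0 hβ1 μ (abs_nonneg z)

lemma wright_continuous {β : ℝ} (hβ0 : 0 < β) (hβ1 : β < 1) (μ : ℝ) :
    Continuous (fun z => wright (-β) μ z) := by
  rw [continuous_iff_continuousAt]
  intro z₀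
  set R : ℝ := |z₀| + 1 with hR
  have hR0 : 0 ≤ R := by positivity
  have hco : ContinuousOn (fun z : ℝ => ∑' k : ℕ, z ^ k /
      (k.factorial * Real.Gamma (-β * k + μ))) (Ioo (-R) R) := by
    apply continuousOn_tsum (fun k => Continuous.continuousOn (by continuity))
      (wright_norm_summable hβ0 hβ1 μ hR0)
    intro k z hz
    rw [wright_term_norm]
    exact div_le_div_nonneg_denom
      (pow_le_pow_left₀ (abs_nonneg z) (abs_le.mpr ⟨hz.1.le, hz.2.le⟩) k) (by positivity)
  have hmem : Ioo (-R) R ∈ nhds z₀ := by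
    apply Ioo_mem_nhds
    · have := neg_abs_le z₀; simp only [hR]; linarith
    · have := le_abs_self z₀; simp only [hR]; linarith
  exact hco.continuousAt hmem

lemma wright_zero (ρ μ : ℝ) : wright ρ μ 0 = 1 / Real.Gamma μ := by
  unfold wright
  rw [tsum_eq_single 0 (fun k hk => by simp [zero_pow hk])]
  simp

lemma key_integral {β : ℝ} (hβ0 : 0 < β) (hβ1 : β < 1) (δ : ℝ) {c : ℝ} (hc : 0 < c)
    {p q : ℝ} (hp : 0 ≤ p) (hpq : p ≤ q) :
    (∫ x in p..q, wright (-β) δ (-(x * c))) =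
      c⁻¹ * (wright (-β) (δ + β) (-(p * c)) - wright (-β) (δ + β) (-(q * c))) := by
  have hq : 0 ≤ q := hp.trans hpq
  set F : ℕ → ℝ → ℝ := fun k x => (-(x * c)) ^ k / (k.factorial * Real.Gamma (-β * k + δ))
    with hF
  have hFc : ∀ k, Continuous (F k) := fun k => by simp only [hF]; continuity
  have hFint : ∀ k, Integrable (F k) (volume.restrict (Ioc p q)) := fun k =>
    (hFc k).integrableOn_Ioc
  -- summability of integrals of norms
  have hFsum : Summable fun k => ∫ x in Ioc p q, ‖F k x‖ := by
    apply Summable.of_nonneg_of_le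
      (fun k => integral_nonneg (fun x => norm_nonneg _))
      (fun k => ?_)
      (((wright_norm_summable hβ0 hβ1 δ (by positivity : (0:ℝ) ≤ q * c)).mul_right (q - p)))
    have hle : ∀ x ∈ Ioc p q, ‖F k x‖ ≤ (q * c) ^ k / (k.factorial * |Real.Gamma (-β * k + δ)|) := by
      intro x hx
      simp only [hF]
      rw [wright_term_norm β δ _ k]
      apply div_le_div_nonneg_denom _ (by positivity)
      apply pow_le_pow_left₀ (abs_nonneg _)
      rw [abs_neg, abs_mul, abs_of_pos hc]
      have : |x| = x := abs_of_pos (hp.trans_lt hx.1)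
      rw [this]
      exact mul_le_mul_of_nonneg_right hx.2 hc.le
    calc (∫ x in Ioc p q, ‖F k x‖)
        ≤ ∫ _x in Ioc p q, (q * c) ^ k / (k.factorial * |Real.Gamma (-β * k + δ)|) := by
          apply setIntegral_mono_on (hFint k).norm ((integrableOn_const_iff (by simp)).mpr (Or.inr ?_))
            measurableSet_Ioc hle
          rw [Real.volume_Ioc]; exact ENNReal.ofReal_lt_top
      _ = (q * c) ^ k / (↑k.factorial * |Real.Gamma (-β * ↑k + δ)|) * (q - p) := by
          rw [MeasureTheory.setIntegral_const, Real.volume_real_Ioc_of_le hpq,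
            smul_eq_mul, mul_comm]
  -- termwise integration
  have hswap : (∫ x in Ioc p q, ∑' k, F k x) = ∑' k, ∫ x in Ioc p q, F k x :=
    (integral_tsum_of_summable_integral_norm hFint hFsum).symm
  have hLHS : (∫ x in p..q, wright (-β) δ (-(x * c)))
      = ∑' k : ℕ, ((-c) ^ k / (k.factorial * Real.Gamma (-β * k + δ)))
          * ((q ^ (k+1) - p ^ (k+1)) / (k+1)) := by
    rw [intervalIntegral.integral_of_le hpq]
    unfold wright
    rw [hswap]
    congr 1
    funext k
    have hFeq : ∀ x : ℝ, F k x = ((-c) ^ k / (k.factorial * Real.Gamma (-β * k + δ))) * x ^ k := by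
      intro x
      simp only [hF]
      rw [show -(x * c) = (-c) * x by ring, mul_pow]
      ring
    calc (∫ x in Ioc p q, F k x)
        = ∫ x in Ioc p q, ((-c) ^ k / (k.factorial * Real.Gamma (-β * k + δ))) * x ^ k := by
          simp_rw [hFeq]
      _ = ((-c) ^ k / (k.factorial * Real.Gamma (-β * k + δ))) * ∫ x in Ioc p q, x ^ k := by
          rw [MeasureTheory.integral_const_mul]
      _ = ((-c) ^ k / (k.factorial * Real.Gamma (-β * k + δ))) * ((q ^ (k+1) - p ^ (k+1)) / (k+1)) := by
          rw [← intervalIntegral.integral_of_le hpq, integral_pow]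
  rw [hLHS]
  -- now the RHS
  unfold wright
  rw [← Summable.tsum_sub (wright_summable hβ0 hβ1 (δ+β) _) (wright_summable hβ0 hβ1 (δ+β) _)]
  set h : ℕ → ℝ := fun k => ((-(p * c)) ^ k / (k.factorial * Real.Gamma (-β * k + (δ+β)))
      - (-(q * c)) ^ k / (k.factorial * Real.Gamma (-β * k + (δ+β)))) with hh
  have hhsum : Summable h :=
    (wright_summable hβ0 hβ1 (δ+β) _).sub (wright_summable hβ0 hβ1 (δ+β) _)
  rw [Summable.tsum_eq_zero_add hhsum]
  have h0 : h 0 = 0 := by simp [hh]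
  rw [h0, zero_add, ← tsum_mul_left]
  apply tsum_congr
  intro k
  have harg : -β * ((k:ℝ) + 1) + (δ + β) = -β * k + δ := by ring
  simp only [hh]
  push_cast
  rw [harg]
  have hfac : (((k+1 : ℕ)).factorial : ℝ) = ((k:ℝ)+1) * k.factorial := by
    rw [Nat.factorial_succ]; push_cast; ring
  rcases eq_or_ne (Real.Gamma (-β * k + δ)) 0 with hG | hG
  · rw [hG]
    simp
  · rw [hfac]
    field_simp
    ring

lemma fubini_step {β : ℝ} (hβ0 : 0 < β) (hβ1 : β < 1) {l y : ℝ} (δ : ℝ) (hl : 0 < l)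
    (hy : 0 < y) {τ : ℝ → ℝ} (hτ : ContinuousOn τ (Icc 0 l)) {X : ℝ → ℝ} (hX : Continuous X) :
    (∫ x in (0:ℝ)..l, (1/2 : ℝ) *
        ∫ t in (0:ℝ)..l, τ t * (y ^ (δ-1) * wright (-β) δ (-(|X x - t| * y ^ (-β)))))
    = (1/2 : ℝ) * ∫ t in (0:ℝ)..l,
        τ t * (y ^ (δ-1) * ∫ x in (0:ℝ)..l, wright (-β) δ (-(|X x - t| * y ^ (-β)))) := by
  set F : ℝ → ℝ → ℝ := fun x t => τ t * (y ^ (δ-1) * wright (-β) δ (-(|X x - t| * y ^ (-β))))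
    with hF
  have hint : Integrable (Function.uncurry F)
      ((volume.restrict (Ioc (0:ℝ) l)).prod (volume.restrict (Ioc (0:ℝ) l))) := by
    rw [Measure.prod_restrict]
    apply IntegrableOn.mono_set (t := Icc (0:ℝ) l ×ˢ Icc (0:ℝ) l)
    · apply ContinuousOn.integrableOn_compact (isCompact_Icc.prod isCompact_Icc)
      apply ContinuousOn.mul
      · exact hτ.comp continuous_snd.continuousOn (fun p hp => hp.2)
      · apply Continuous.continuousOn
        exact continuous_const.mul ((wright_continuous hβ0 hβ1 δ).comp
          (((continuous_abs.comp ((hX.comp continuous_fst).sub continuous_snd)).mul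
            continuous_const).neg))
    · exact Set.prod_mono Ioc_subset_Icc_self Ioc_subset_Icc_self
  rw [intervalIntegral.integral_const_mul]
  congr 1
  have h1 : (∫ x in (0:ℝ)..l, ∫ t in (0:ℝ)..l, F x t) = ∫ t in (0:ℝ)..l, ∫ x in (0:ℝ)..l, F x t := by
    rw [intervalIntegral.integral_of_le hl.le, intervalIntegral.integral_of_le hl.le]
    simp_rw [intervalIntegral.integral_of_le hl.le]
    exact MeasureTheory.integral_integral_swap hint
  rw [h1]
  apply intervalIntegral.integral_congr
  intro t _
  simp only [hF]
  rw [show (fun x => τ t * (y ^ (δ-1) * wright (-β) δ (-(|X x - t| * y ^ (-β)))))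
      = (fun x => (τ t * y ^ (δ-1)) * wright (-β) δ (-(|X x - t| * y ^ (-β)))) from
    funext fun x => by ring]
  rw [intervalIntegral.integral_const_mul]
  ring

lemma inner_incr {β : ℝ} (hβ0 : 0 < β) (hβ1 : β < 1) (δ : ℝ) {y : ℝ} (hy : 0 < y)
    {p l : ℝ} (hp : 0 ≤ p) (hl : 0 ≤ l) :
    (∫ x in (0:ℝ)..l, wright (-β) δ (-((x + p) * y ^ (-β))))
      = y ^ β * (wright (-β) (δ + β) (-(p * y ^ (-β)))
          - wright (-β) (δ + β) (-((l + p) * y ^ (-β)))) := by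
  have hc : 0 < y ^ (-β) := Real.rpow_pos_of_pos hy _
  rw [intervalIntegral.integral_comp_add_right (fun x => wright (-β) δ (-(x * y ^ (-β)))) p,
    zero_add, key_integral hβ0 hβ1 δ hc hp (by linarith), Real.rpow_neg hy.le β, inv_inv]

lemma inner_decr {β : ℝ} (hβ0 : 0 < β) (hβ1 : β < 1) (δ : ℝ) {y : ℝ} (hy : 0 < y)
    {p l : ℝ} (hl : 0 ≤ l) (hpl : l ≤ p) :
    (∫ x in (0:ℝ)..l, wright (-β) δ (-((p - x) * y ^ (-β))))
      = y ^ β * (wright (-β) (δ + β) (-((p - l) * y ^ (-β)))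
          - wright (-β) (δ + β) (-(p * y ^ (-β)))) := by
  have hc : 0 < y ^ (-β) := Real.rpow_pos_of_pos hy _
  rw [intervalIntegral.integral_comp_sub_left (fun x => wright (-β) δ (-(x * y ^ (-β)))) p,
    sub_zero, key_integral hβ0 hβ1 δ hc (by linarith) (by linarith), Real.rpow_neg hy.le β,
    inv_inv]

/-- Property 6: for `0 < β < 1`, `0 < l`, real `δ`, continuous `τ` on `[0,l]`, and `y > 0`:
(i) for `|a| ≥ 2l`, `∫₀^l 𝓝_{0l}^{δ,a±x,y} τ dx =
  ± sign(a) [𝓝_{0l}^{δ+β,a,y} τ − 𝓝_{0l}^{δ+β,a±l,y} τ]`;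
(ii) `∫₀^l 𝓝_{0l}^{δ,-x,y} τ dx = 𝓝_{0l}^{δ+β,0,y} τ − 𝓝_{0l}^{δ+β,-l,y} τ`;
(iii) `∫₀^l 𝓝_{0l}^{δ,x,y} τ dx = −[𝓝_{0l}^{δ+β,0,y} τ + 𝓝_{0l}^{δ+β,l,y} τ]
  + (y^{δ+β-1}/Γ(δ+β)) ∫₀^l τ`. -/
theorem Nop_x_integral (β l δ : ℝ) (hβ0 : 0 < β) (hβ1 : β < 1) (hl : 0 < l)
    (τ : ℝ → ℝ) (hτ : ContinuousOn τ (Set.Icc 0 l)) :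
    ∀ y : ℝ, 0 < y →
      (∀ a : ℝ, 2 * l ≤ |a| →
        (∫ x in (0:ℝ)..l, Nop β 0 l δ (a + x) y τ) =
          Real.sign a * (Nop β 0 l (δ + β) a y τ - Nop β 0 l (δ + β) (a + l) y τ) ∧
        (∫ x in (0:ℝ)..l, Nop β 0 l δ (a - x) y τ) =
          -Real.sign a * (Nop β 0 l (δ + β) a y τ - Nop β 0 l (δ + β) (a - l) y τ)) ∧
      ((∫ x in (0:ℝ)..l, Nop β 0 l δ (-x) y τ) =
        Nop β 0 l (δ + β) 0 y τ - Nop β 0 l (δ + β) (-l) y τ) ∧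
      ((∫ x in (0:ℝ)..l, Nop β 0 l δ x y τ) =
        -(Nop β 0 l (δ + β) 0 y τ + Nop β 0 l (δ + β) l y τ) +
          y ^ (δ + β - 1) / Real.Gamma (δ + β) * ∫ x in (0:ℝ)..l, τ x) := by
  intro y hy
  have hc : 0 < y ^ (-β) := Real.rpow_pos_of_pos hy _
  have hyd : y ^ (δ - 1) * y ^ β = y ^ (δ + β - 1) := by
    rw [← Real.rpow_add hy]; congr 1; ring
  have hNopInt : ∀ θ A : ℝ, IntervalIntegrable
      (fun t => τ t * (y ^ (θ - 1) * wright (-β) θ (-(|A - t| * y ^ (-β))))) volume 0 l := by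
    intro θ A
    apply ContinuousOn.intervalIntegrable
    rw [uIcc_of_le hl.le]
    exact hτ.mul (Continuous.continuousOn (continuous_const.mul
      ((wright_continuous hβ0 hβ1 θ).comp
        (((continuous_abs.comp (continuous_const.sub continuous_id)).mul
          continuous_const).neg))))
  have hτint : IntervalIntegrable τ volume 0 l := by
    apply ContinuousOn.intervalIntegrable; rwa [uIcc_of_le hl.le]
  refine ⟨fun a ha => ?_, ?_, ?_⟩
  · rcases le_abs.mp ha with hpos | hneg
    · -- a ≥ 2l > 0
      have ha0 : 0 < a := by linarith
      constructor
      · -- plus version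
        simp only [Nop]
        rw [fubini_step hβ0 hβ1 δ hl hy hτ (X := fun x => a + x) (by continuity),
          Real.sign_of_pos ha0,
          show ∀ A B : ℝ, (1:ℝ) * (1/2 * A - 1/2 * B) = 1/2 * (A - B) from fun A B => by ring,
          ← intervalIntegral.integral_sub (hNopInt _ _) (hNopInt _ _)]
        congr 1
        apply intervalIntegral.integral_congr
        intro t ht
        rw [uIcc_of_le hl.le] at ht
        beta_reduce
        have h1 : (∫ x in (0:ℝ)..l, wright (-β) δ (-(|a + x - t| * y ^ (-β))))
            = ∫ x in (0:ℝ)..l, wright (-β) δ (-((x + (a - t)) * y ^ (-β))) := by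
          apply intervalIntegral.integral_congr
          intro x hx
          rw [uIcc_of_le hl.le] at hx
          beta_reduce
          rw [show |a + x - t| = x + (a - t) from by
            rw [show a + x - t = x + (a - t) from by ring]
            exact abs_of_nonneg (by nlinarith [ht.2, hx.1])]
        rw [h1, inner_incr hβ0 hβ1 δ hy (by nlinarith [ht.2] : (0:ℝ) ≤ a - t) hl.le,
          abs_of_nonneg (by nlinarith [ht.2] : (0:ℝ) ≤ a - t),
          abs_of_nonneg (by nlinarith [ht.2] : (0:ℝ) ≤ a + l - t),
          show a + l - t = l + (a - t) from by ring, ← hyd]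
        ring
      · -- minus version
        simp only [Nop]
        rw [fubini_step hβ0 hβ1 δ hl hy hτ (X := fun x => a - x) (by continuity),
          Real.sign_of_pos ha0,
          show ∀ A B : ℝ, -(1:ℝ) * (1/2 * A - 1/2 * B) = 1/2 * (B - A) from fun A B => by ring,
          ← intervalIntegral.integral_sub (hNopInt _ _) (hNopInt _ _)]
        congr 1
        apply intervalIntegral.integral_congr
        intro t ht
        rw [uIcc_of_le hl.le] at ht
        beta_reduce
        have h1 : (∫ x in (0:ℝ)..l, wright (-β) δ (-(|a - x - t| * y ^ (-β))))
            = ∫ x in (0:ℝ)..l, wright (-β) δ (-(((a - t) - x) * y ^ (-β))) := by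
          apply intervalIntegral.integral_congr
          intro x hx
          rw [uIcc_of_le hl.le] at hx
          beta_reduce
          rw [show |a - x - t| = (a - t) - x from by
            rw [show a - x - t = (a - t) - x from by ring]
            exact abs_of_nonneg (by nlinarith [ht.2, hx.2])]
        rw [h1, inner_decr hβ0 hβ1 δ hy hl.le (by nlinarith [ht.2] : l ≤ a - t),
          abs_of_nonneg (by nlinarith [ht.2] : (0:ℝ) ≤ a - t),
          abs_of_nonneg (by nlinarith [ht.2] : (0:ℝ) ≤ a - l - t),
          show a - l - t = (a - t) - l from by ring, ← hyd]
        ring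
    · -- a ≤ -2l < 0
      have ha0 : a < 0 := by linarith
      constructor
      · simp only [Nop]
        rw [fubini_step hβ0 hβ1 δ hl hy hτ (X := fun x => a + x) (by continuity),
          Real.sign_of_neg ha0,
          show ∀ A B : ℝ, (-1:ℝ) * (1/2 * A - 1/2 * B) = 1/2 * (B - A) from fun A B => by ring,
          ← intervalIntegral.integral_sub (hNopInt _ _) (hNopInt _ _)]
        congr 1
        apply intervalIntegral.integral_congr
        intro t ht
        rw [uIcc_of_le hl.le] at ht
        beta_reduce
        have h1 : (∫ x in (0:ℝ)..l, wright (-β) δ (-(|a + x - t| * y ^ (-β))))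
            = ∫ x in (0:ℝ)..l, wright (-β) δ (-(((t - a) - x) * y ^ (-β))) := by
          apply intervalIntegral.integral_congr
          intro x hx
          rw [uIcc_of_le hl.le] at hx
          beta_reduce
          rw [show |a + x - t| = (t - a) - x from by
            rw [abs_of_nonpos (by nlinarith [ht.1, hx.2] : a + x - t ≤ 0)]; ring]
        rw [h1, inner_decr hβ0 hβ1 δ hy hl.le (by nlinarith [ht.1] : l ≤ t - a),
          abs_of_nonpos (by nlinarith [ht.1] : a - t ≤ 0),
          abs_of_nonpos (by nlinarith [ht.1] : a + l - t ≤ 0),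
          show -(a + l - t) = (t - a) - l from by ring, show -(a - t) = t - a from by ring, ← hyd]
        ring
      · simp only [Nop]
        rw [fubini_step hβ0 hβ1 δ hl hy hτ (X := fun x => a - x) (by continuity),
          Real.sign_of_neg ha0,
          show ∀ A B : ℝ, -(-1:ℝ) * (1/2 * A - 1/2 * B) = 1/2 * (A - B) from fun A B => by ring,
          ← intervalIntegral.integral_sub (hNopInt _ _) (hNopInt _ _)]
        congr 1
        apply intervalIntegral.integral_congr
        intro t ht
        rw [uIcc_of_le hl.le] at ht
        beta_reduce
        have h1 : (∫ x in (0:ℝ)..l, wright (-β) δ (-(|a - x - t| * y ^ (-β))))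
            = ∫ x in (0:ℝ)..l, wright (-β) δ (-((x + (t - a)) * y ^ (-β))) := by
          apply intervalIntegral.integral_congr
          intro x hx
          rw [uIcc_of_le hl.le] at hx
          beta_reduce
          rw [show |a - x - t| = x + (t - a) from by
            rw [abs_of_nonpos (by nlinarith [ht.1, hx.1] : a - x - t ≤ 0)]; ring]
        rw [h1, inner_incr hβ0 hβ1 δ hy (by nlinarith [ht.1] : (0:ℝ) ≤ t - a) hl.le,
          abs_of_nonpos (by nlinarith [ht.1] : a - t ≤ 0),
          abs_of_nonpos (by nlinarith [ht.1] : a - l - t ≤ 0),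
          show -(a - l - t) = l + (t - a) from by ring, show -(a - t) = t - a from by ring, ← hyd]
        ring
  · -- case (ii)
    simp only [Nop]
    rw [fubini_step hβ0 hβ1 δ hl hy hτ (X := fun x => -x) (by continuity),
      show ∀ A B : ℝ, (1/2 : ℝ) * A - 1/2 * B = 1/2 * (A - B) from fun A B => by ring,
      ← intervalIntegral.integral_sub (hNopInt _ _) (hNopInt _ _)]
    congr 1
    apply intervalIntegral.integral_congr
    intro t ht
    rw [uIcc_of_le hl.le] at ht
    beta_reduce
    have h1 : (∫ x in (0:ℝ)..l, wright (-β) δ (-(|-x - t| * y ^ (-β))))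
        = ∫ x in (0:ℝ)..l, wright (-β) δ (-((x + t) * y ^ (-β))) := by
      apply intervalIntegral.integral_congr
      intro x hx
      rw [uIcc_of_le hl.le] at hx
      beta_reduce
      rw [show |-x - t| = x + t from by
        rw [abs_of_nonpos (by nlinarith [ht.1, hx.1] : -x - t ≤ 0)]; ring]
    rw [h1, inner_incr hβ0 hβ1 δ hy ht.1 hl.le,
      abs_of_nonpos (by linarith [ht.1] : (0:ℝ) - t ≤ 0),
      abs_of_nonpos (by nlinarith [ht.1] : -l - t ≤ 0),
      show -(0 - t) = t from by ring, show -(-l - t) = l + t from by ring, ← hyd]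
    ring
  · -- case (iii)
    simp only [Nop]
    rw [fubini_step hβ0 hβ1 δ hl hy hτ (X := fun x => x) continuous_id]
    have hRHS : -((1/2 : ℝ) * (∫ t in (0:ℝ)..l,
            τ t * (y ^ (δ + β - 1) * wright (-β) (δ + β) (-(|0 - t| * y ^ (-β)))))
          + (1/2 : ℝ) * ∫ t in (0:ℝ)..l,
            τ t * (y ^ (δ + β - 1) * wright (-β) (δ + β) (-(|l - t| * y ^ (-β)))))
          + y ^ (δ + β - 1) / Real.Gamma (δ + β) * ∫ x in (0:ℝ)..l, τ x
        = (1/2 : ℝ) * ∫ t in (0:ℝ)..l,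
            (2 * (y ^ (δ + β - 1) / Real.Gamma (δ + β)) * τ t
              - τ t * (y ^ (δ + β - 1) * wright (-β) (δ + β) (-(|0 - t| * y ^ (-β))))
              - τ t * (y ^ (δ + β - 1) * wright (-β) (δ + β) (-(|l - t| * y ^ (-β))))) := by
      rw [intervalIntegral.integral_sub (((hτint.const_mul _).sub (hNopInt _ _)))
          (hNopInt _ _),
        intervalIntegral.integral_sub (hτint.const_mul _) (hNopInt _ _),
        intervalIntegral.integral_const_mul]
      ring
    rw [hRHS]
    congr 1
    apply intervalIntegral.integral_congr
    intro t ht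
    rw [uIcc_of_le hl.le] at ht
    beta_reduce
    have hWc : Continuous (fun x => wright (-β) δ (-(|x - t| * y ^ (-β)))) :=
      (wright_continuous hβ0 hβ1 δ).comp
        (((continuous_abs.comp (continuous_id.sub continuous_const)).mul continuous_const).neg)
    have hsplit : (∫ x in (0:ℝ)..l, wright (-β) δ (-(|x - t| * y ^ (-β))))
        = (∫ x in (0:ℝ)..t, wright (-β) δ (-(|x - t| * y ^ (-β))))
          + ∫ x in t..l, wright (-β) δ (-(|x - t| * y ^ (-β))) :=
      (intervalIntegral.integral_add_adjacent_intervals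
        (hWc.intervalIntegrable _ _) (hWc.intervalIntegrable _ _)).symm
    have hleft : (∫ x in (0:ℝ)..t, wright (-β) δ (-(|x - t| * y ^ (-β))))
        = y ^ β * (wright (-β) (δ + β) (-(0 * y ^ (-β)))
            - wright (-β) (δ + β) (-(t * y ^ (-β)))) := by
      have h2 : (∫ x in (0:ℝ)..t, wright (-β) δ (-(|x - t| * y ^ (-β))))
          = ∫ x in (0:ℝ)..t, wright (-β) δ (-((t - x) * y ^ (-β))) := by
        apply intervalIntegral.integral_congr
        intro x hx
        rw [uIcc_of_le ht.1] at hx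
        beta_reduce
        rw [show |x - t| = t - x from by
          rw [abs_of_nonpos (by linarith [hx.2] : x - t ≤ 0)]; ring]
      rw [h2, intervalIntegral.integral_comp_sub_left
          (fun x => wright (-β) δ (-(x * y ^ (-β)))) t, sub_self, sub_zero,
        key_integral hβ0 hβ1 δ hc le_rfl ht.1, Real.rpow_neg hy.le β, inv_inv]
    have hright : (∫ x in t..l, wright (-β) δ (-(|x - t| * y ^ (-β))))
        = y ^ β * (wright (-β) (δ + β) (-(0 * y ^ (-β)))
            - wright (-β) (δ + β) (-((l - t) * y ^ (-β)))) := by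
      have h2 : (∫ x in t..l, wright (-β) δ (-(|x - t| * y ^ (-β))))
          = ∫ x in t..l, wright (-β) δ (-((x - t) * y ^ (-β))) := by
        apply intervalIntegral.integral_congr
        intro x hx
        rw [uIcc_of_le ht.2] at hx
        beta_reduce
        rw [abs_of_nonneg (by linarith [hx.1] : (0:ℝ) ≤ x - t)]
      rw [h2, intervalIntegral.integral_comp_sub_right
          (fun x => wright (-β) δ (-(x * y ^ (-β)))) t, sub_self,
        key_integral hβ0 hβ1 δ hc le_rfl (by linarith [ht.2]), Real.rpow_neg hy.le β, inv_inv]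
    rw [hsplit, hleft, hright, show -((0:ℝ) * y ^ (-β)) = 0 from by ring, wright_zero,
      abs_of_nonpos (by linarith [ht.1] : (0:ℝ) - t ≤ 0),
      abs_of_nonneg (by linarith [ht.2] : (0:ℝ) ≤ l - t),
      show -((0:ℝ) - t) = t from by ring, ← hyd]
    ring
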